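/- Let M be a compact Riemannian manifold with a G-invariant metric for a compact Lie group G, Φ a G-invariant Morse function, p, q critical points, and c a point in W^u(p) ∩ W^s(q) with p ≠ q. Consider the G × ℝ action (g,t)·c = g·γ_c(t) on W^u(p) ∩ W^s(q). If (g,t) stabilizes c and G·c is closed in W^u(p) ∩ W^s(q), then t = 0. In other words, the stabilizer of c in G × ℝ equals G_c × {0}. -/

import Mathlib

open Manifold Filter Topology

/-- In the invariant Morse setting (compact `M`, `G`-invariant metric and
Morse function `Φ`, negative gradient flow `γ`), let `p ≠ q` be critical points and
`c ∈ W^u(p) ∩ W^s(q)`. Consider the `G × ℝ`-action `(g,t) • c = g • γ_c(t)`. If the orbit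
`G • c` is closed in `W^u(p) ∩ W^s(q)`, then the stabilizer of `c` in `G × ℝ` is
`G_c × {0}`: whenever `(g,t)` stabilizes `c` we must have `t = 0`. -/
theorem stabilizer_eq_prod
    {E : Type*} [NormedAddCommGroup E] [NormedSpace ℝ E]
    {M : Type*} [TopologicalSpace M] [ChartedSpace E M]
    [IsManifold 𝓘(ℝ, E) (⊤ : ℕ∞) M] [CompactSpace M] [T2Space M]
    {F : Type*} [NormedAddCommGroup F] [NormedSpace ℝ F]
    {G : Type*} [TopologicalSpace G] [ChartedSpace F G] [Group G]
    [LieGroup 𝓘(ℝ, F) (⊤ : ℕ∞) G] [CompactSpace G]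
    [MulAction G M]
    (hact : ∀ g : G, ContMDiff 𝓘(ℝ, E) 𝓘(ℝ, E) (⊤ : ℕ∞) (fun p : M => g • p))
    -- the G-invariant Riemannian metric
    (riem : M → E →ₗ[ℝ] E →ₗ[ℝ] ℝ)
    (hsymm : ∀ (p : M) (v w : E), riem p v w = riem p w v)
    (hpos : ∀ (p : M) (v : E), v ≠ 0 → 0 < riem p v v)
    (hinv : ∀ (g : G) (p : M) (v w : E),
      riem (g • p) (mfderiv 𝓘(ℝ, E) 𝓘(ℝ, E) (fun x : M => g • x) p v)
        (mfderiv 𝓘(ℝ, E) 𝓘(ℝ, E) (fun x : M => g • x) p w) = riem p v w)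
    (Φ : M → ℝ) (hΦ : ContMDiff 𝓘(ℝ, E) 𝓘(ℝ) (⊤ : ℕ∞) Φ)
    (hΦinv : ∀ (g : G) (p : M), Φ (g • p) = Φ p)
    -- the gradient of Φ with respect to the invariant metric
    (grad : M → E)
    (hgrad : ∀ (p : M) (v : E), riem p (grad p) v = mfderiv 𝓘(ℝ, E) 𝓘(ℝ) Φ p v)
    -- the negative gradient flow: γ p is the unique solution of γ(0) = p, γ' = -∇Φ(γ)
    (γ : M → ℝ → M)
    (hγ0 : ∀ p : M, γ p 0 = p)
    (hode : ∀ (p : M) (t : ℝ), HasMFDerivAt 𝓘(ℝ, ℝ) 𝓘(ℝ, E) (γ p) t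
      (ContinuousLinearMap.smulRight (1 : ℝ →L[ℝ] ℝ) (-grad (γ p t))))
    (huniq : ∀ (p : M) (δ : ℝ → M), δ 0 = p →
      (∀ t : ℝ, HasMFDerivAt 𝓘(ℝ, ℝ) 𝓘(ℝ, E) δ t
        (ContinuousLinearMap.smulRight (1 : ℝ →L[ℝ] ℝ) (-grad (δ t)))) → δ = γ p)
    -- Φ is a Morse function: its critical set is finite
    (hmorse : {x : M | mfderiv 𝓘(ℝ, E) 𝓘(ℝ) Φ x = 0}.Finite)
    (p q : M) (hpq : p ≠ q)
    (hp : mfderiv 𝓘(ℝ, E) 𝓘(ℝ) Φ p = 0) (hq : mfderiv 𝓘(ℝ, E) 𝓘(ℝ) Φ q = 0)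
    -- c lies in W^u(p) ∩ W^s(q)
    (c : M) (hcu : Tendsto (γ c) atBot (𝓝 p)) (hcs : Tendsto (γ c) atTop (𝓝 q))
    -- the orbit G • c is closed in W^u(p) ∩ W^s(q)
    (hclosed : IsClosed ((↑) ⁻¹' MulAction.orbit G c :
      Set {x : M | Tendsto (γ x) atBot (𝓝 p) ∧ Tendsto (γ x) atTop (𝓝 q)})) :
    {gt : G × ℝ | gt.1 • γ c gt.2 = c} = {gt : G × ℝ | gt.1 • c = c ∧ gt.2 = 0} := by
  -- Step 1: the flow never passes through a critical point of Φ
  have key : ∀ s : ℝ, grad (γ c s) ≠ 0 := by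
    intro s hzero
    -- the flow starting at γ c s is constant
    have hconst : γ (γ c s) = fun _ => γ c s := by
      refine (huniq (γ c s) (fun _ => γ c s) rfl fun t => ?_).symm
      have h0 : (ContinuousLinearMap.smulRight (1 : ℝ →L[ℝ] ℝ) (-grad (γ c s)))
          = 0 := by ext x; simp [hzero]
          
      erw [h0]
      exact hasMFDerivAt_const _ _
    -- the shifted flow agrees with the flow from γ c s
    have hshift : (fun r => γ c (s + r)) = γ (γ c s) := by
      refine huniq (γ c s) _ (by simp) fun r => ?_
      have h2 : HasMFDerivAt 𝓘(ℝ, ℝ) 𝓘(ℝ, ℝ) (fun r : ℝ => s + r) r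
          (ContinuousLinearMap.id ℝ ℝ) := by
        refine hasMFDerivAt_iff_hasFDerivAt.mpr ?_
        exact (hasFDerivAt_id r).const_add s
      have h3 := (hode c (s + r)).comp r h2
      exact h3
    have hconst2 : ∀ r : ℝ, γ c (s + r) = γ c s := by
      intro r
      have := congrFun hshift r
      rw [hconst] at this
      exact this
    have hcq : γ c s = q := by
      have h4 : Tendsto (fun r : ℝ => γ c (s + r)) atTop (𝓝 q) :=
        hcs.comp (tendsto_atTop_add_const_left _ s tendsto_id)
      have h5 : Tendsto (fun _ : ℝ => γ c s) atTop (𝓝 q) := by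
        refine h4.congr fun r => (hconst2 r)
      exact tendsto_nhds_unique tendsto_const_nhds h5
    have hcp : γ c s = p := by
      have h4 : Tendsto (fun r : ℝ => γ c (s + r)) atBot (𝓝 p) :=
        hcu.comp (tendsto_atBot_add_const_left _ s tendsto_id)
      have h5 : Tendsto (fun _ : ℝ => γ c s) atBot (𝓝 p) := by
        refine h4.congr fun r => (hconst2 r)
      exact tendsto_nhds_unique tendsto_const_nhds h5
    exact hpq (hcp ▸ hcq)
  -- Step 2: Φ ∘ γ c is strictly decreasing
  have hder : ∀ s : ℝ, HasDerivAt (fun s => Φ (γ c s))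
      (-(riem (γ c s) (grad (γ c s)) (grad (γ c s)))) s := by
    intro s
    have hΦ' : HasMFDerivAt 𝓘(ℝ, E) 𝓘(ℝ) Φ (γ c s)
        (mfderiv 𝓘(ℝ, E) 𝓘(ℝ) Φ (γ c s)) :=
      (hΦ.mdifferentiable (by simp) (γ c s)).hasMFDerivAt
    have h1 := hΦ'.comp s (hode c s)
    rw [hasMFDerivAt_iff_hasFDerivAt] at h1
    have h2 := @HasFDerivAt.hasDerivAt ℝ _ ℝ _ _ _ _ _
      (by exact inferInstanceAs (ContinuousSMul ℝ ℝ)) _ h1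
    have h3 : ((mfderiv 𝓘(ℝ, E) 𝓘(ℝ) Φ (γ c s)).comp
        (ContinuousLinearMap.smulRight (1 : ℝ →L[ℝ] ℝ) (-grad (γ c s)))) (1 : ℝ)
        = -(riem (γ c s) (grad (γ c s)) (grad (γ c s))) := by
      erw [ContinuousLinearMap.comp_apply, ContinuousLinearMap.smulRight_apply, one_smul, map_neg]
      exact congrArg (fun x : ℝ => -x) (hgrad _ _).symm
    exact h3 ▸ h2
  have hanti : StrictAnti (fun s => Φ (γ c s)) := by
    apply strictAnti_of_deriv_neg
    intro s
    rw [(hder s).deriv]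
    have := hpos (γ c s) (grad (γ c s)) (key s)
    linarith
  -- Conclusion
  ext ⟨g, t⟩
  simp only [Set.mem_setOf_eq]
  constructor
  · intro h
    have hΦeq : Φ (γ c t) = Φ (γ c 0) := by
      rw [hγ0]
      calc Φ (γ c t) = Φ (g • γ c t) := (hΦinv g _).symm
        _ = Φ c := by rw [h]
    have ht : t = 0 := hanti.injective hΦeq
    refine ⟨?_, ht⟩
    rw [ht, hγ0] at h
    exact h
  · rintro ⟨h1, h2⟩
    rw [h2, hγ0]
    exact h1
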